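/- Under a partition of X into k nonempty orbits with Gibbs kernel G, for π-reversible P one has ‖GP − Π‖²_{F,π} ≤ k − 1 and ‖GPG − Π‖²_{F,π} ≤ k − 1. In contrast, if P is π-stationary and lazy (P(x,x) ≥ 1/2 for all x), then ‖P − Π‖²_{F,π} ≥ n/4 − 1 where n = |X|. -/

import Mathlib

open Finset Matrix

namespace GpgStmt

noncomputable section

variable {X : Type*}

/-- Matrix with all rows equal to π. -/
def Pimat {X : Type*} (π : X → ℝ) : Matrix X X ℝ := Matrix.of fun _ y => π y

def IsStochastic [Fintype X] (P : Matrix X X ℝ) : Prop :=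
  (∀ x y, 0 ≤ P x y) ∧ ∀ x, ∑ y, P x y = 1

/-- π-stationary transition matrix. -/
def IsStationary [Fintype X] (π : X → ℝ) (P : Matrix X X ℝ) : Prop :=
  IsStochastic P ∧ ∀ y, ∑ x, π x * P x y = π y

/-- π-reversible transition matrix. -/
def IsReversible [Fintype X] (π : X → ℝ) (P : Matrix X X ℝ) : Prop :=
  IsStochastic P ∧ ∀ x y, π x * P x y = π y * P y x

/-- mass of the orbit O_i = {x | o x = i}. -/
def orbMass [Fintype X] {k : ℕ} (π : X → ℝ) (o : X → Fin k) (i : Fin k) : ℝ :=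
  ∑ x ∈ Finset.filter (fun x => o x = i) Finset.univ, π x

/-- Gibbs kernel of the orbit partition induced by o. -/
def gibbs [Fintype X] {k : ℕ} (π : X → ℝ) (o : X → Fin k) : Matrix X X ℝ :=
  Matrix.of fun x y => if o x = o y then π y / orbMass π o (o x) else 0

/-- Projection chain P̄ of P with respect to the orbit partition induced by o. -/
def projChain [Fintype X] {k : ℕ} (π : X → ℝ) (o : X → Fin k) (P : Matrix X X ℝ) :
    Matrix (Fin k) (Fin k) ℝ :=
  Matrix.of fun i j => (1 / orbMass π o i) *
    ∑ x ∈ Finset.filter (fun x => o x = i) Finset.univ,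
      ∑ y ∈ Finset.filter (fun y => o y = j) Finset.univ, π x * P x y

/-- π-weighted KL divergence between transition matrices, with 0·log(0/a) = 0. -/
def klDiv {X : Type*} [Fintype X] (π : X → ℝ) (Q R : Matrix X X ℝ) : ℝ :=
  ∑ x, ∑ y, π x * Q x y * Real.log (Q x y / R x y)

/-- ℓ²(π)-adjoint of a matrix. -/
def piAdj [Fintype X] (π : X → ℝ) (M : Matrix X X ℝ) : Matrix X X ℝ :=
  Matrix.of fun x y => π y * M y x / π x

/-- squared π-weighted Frobenius norm ‖M‖²_{F,π} = Tr(M*M). -/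
def frobSq [Fintype X] (π : X → ℝ) (M : Matrix X X ℝ) : ℝ :=
  Matrix.trace (piAdj π M * M)

/-- π-mass of a finite set. -/
def mass [Fintype X] (π : X → ℝ) (S : Finset X) : ℝ := ∑ x ∈ S, π x

/-- Two-block Gibbs kernel G_S for the partition X = S ⊔ Sᶜ. -/
def gibbsTwo [Fintype X] [DecidableEq X] (π : X → ℝ) (S : Finset X) : Matrix X X ℝ :=
  Matrix.of fun x y =>
    if x ∈ S then (if y ∈ S then π y / mass π S else 0)
    else (if y ∈ S then 0 else π y / mass π Sᶜ)

/-- g(S) = (1/(π(S)π(S'))) Σ_{x∈S,y∈S'} π(x) P²(x,y). -/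
def gfun [Fintype X] [DecidableEq X] (π : X → ℝ) (P : Matrix X X ℝ) (S : Finset X) : ℝ :=
  (1 / (mass π S * mass π Sᶜ)) * ∑ x ∈ S, ∑ y ∈ Sᶜ, π x * (P * P) x y

/-- h(S) = (1/π(S)) Σ_{x∈S,y∈S'} π(x) P²(x,y). -/
def hfun [Fintype X] [DecidableEq X] (π : X → ℝ) (P : Matrix X X ℝ) (S : Finset X) : ℝ :=
  (1 / mass π S) * ∑ x ∈ S, ∑ y ∈ Sᶜ, π x * (P * P) x y

/-- Ergodicity (primitivity): some power of P has all entries positive. -/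
def IsErgodic [Fintype X] [DecidableEq X] (P : Matrix X X ℝ) : Prop :=
  ∃ m : ℕ, ∀ x y, 0 < (P ^ m) x y

/-- Shannon entropy of π. -/
def shannonEnt [Fintype X] (π : X → ℝ) : ℝ := -∑ x, π x * Real.log (π x)

/-- Entropy rate H_π(Q). -/
def entRate [Fintype X] (π : X → ℝ) (Q : Matrix X X ℝ) : ℝ :=
  -∑ x, ∑ y, π x * Q x y * Real.log (Q x y)

/-- Supermodular set function on 2^X. -/
def Supermodular {X : Type*} [DecidableEq X] (F : Finset X → ℝ) : Prop :=
  ∀ A B : Finset X, F A + F B ≤ F (A ∩ B) + F (A ∪ B)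

/-- Submodular set function on 2^X. -/
def Submodular {X : Type*} [DecidableEq X] (F : Finset X → ℝ) : Prop :=
  ∀ A B : Finset X, F (A ∩ B) + F (A ∪ B) ≤ F A + F B


section AuxLemmas

variable [Fintype X] [DecidableEq X] {k : ℕ}

lemma trace_mul_eq (A B : Matrix X X ℝ) :
    Matrix.trace (A * B) = ∑ x, ∑ y, A x y * B y x := by
  simp [Matrix.trace, Matrix.mul_apply, Matrix.diag]

lemma frobSq_eq (π : X → ℝ) (M : Matrix X X ℝ) :
    frobSq π M = ∑ x, ∑ y, (π y * M y x / π x) * M y x := by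
  simp [frobSq, Matrix.trace, Matrix.mul_apply, Matrix.diag, piAdj]

lemma orbMass_pos (π : X → ℝ) (o : X → Fin k) (hπ : ∀ x, 0 < π x)
    (ho : Function.Surjective o) (i : Fin k) : 0 < orbMass π o i := by
  obtain ⟨x, hx⟩ := ho i
  exact Finset.sum_pos (fun y _ => hπ y) ⟨x, by simp [hx]⟩

lemma IsStochastic.mul {A B : Matrix X X ℝ} (hA : IsStochastic A) (hB : IsStochastic B) :
    IsStochastic (A * B) := by
  refine ⟨fun x y => Finset.sum_nonneg fun z _ => mul_nonneg (hA.1 x z) (hB.1 z y), fun x => ?_⟩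
  simp only [Matrix.mul_apply]
  rw [Finset.sum_comm]
  calc ∑ z, ∑ y, A x z * B z y = ∑ z, A x z * ∑ y, B z y := by
        simp [Finset.mul_sum]
    _ = 1 := by simp [hB.2, hA.2 x]

lemma gibbs_stochastic (π : X → ℝ) (o : X → Fin k) (hπ : ∀ x, 0 < π x)
    (ho : Function.Surjective o) : IsStochastic (gibbs π o) := by
  constructor
  · intro x y
    simp only [gibbs, Matrix.of_apply]
    split
    · exact div_nonneg (hπ y).le (orbMass_pos π o hπ ho _).le
    · exact le_refl 0
  · intro x
    simp only [gibbs, Matrix.of_apply]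
    rw [Finset.sum_ite, Finset.sum_const_zero, add_zero, ← Finset.sum_div]
    have : Finset.filter (fun y => o x = o y) Finset.univ
        = Finset.filter (fun y => o y = o x) Finset.univ := by
      ext y; simp [eq_comm]
    rw [this]
    exact div_self (orbMass_pos π o hπ ho (o x)).ne'

lemma piAdj_mul (π : X → ℝ) (hπ : ∀ x, 0 < π x) (A B : Matrix X X ℝ) :
    piAdj π (A * B) = piAdj π B * piAdj π A := by
  ext x y
  simp only [piAdj, Matrix.of_apply, Matrix.mul_apply, Finset.mul_sum, Finset.sum_div]
  refine Finset.sum_congr rfl fun z _ => ?_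
  field_simp [(hπ x).ne', (hπ z).ne']

lemma piAdj_gibbs (π : X → ℝ) (o : X → Fin k) (hπ : ∀ x, 0 < π x) :
    piAdj π (gibbs π o) = gibbs π o := by
  ext x y
  simp only [piAdj, gibbs, Matrix.of_apply]
  by_cases h : o x = o y
  · rw [if_pos h.symm, if_pos h, ← h]
    field_simp [(hπ x).ne']
  · rw [if_neg (fun hh => h hh.symm), if_neg h, mul_zero, zero_div]

lemma piAdj_rev (π : X → ℝ) (hπ : ∀ x, 0 < π x) {P : Matrix X X ℝ}
    (hP : IsReversible π P) : piAdj π P = P := by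
  ext x y
  simp only [piAdj, Matrix.of_apply]
  rw [← hP.2 x y]
  field_simp [(hπ x).ne']

lemma gibbs_idem (π : X → ℝ) (o : X → Fin k) (hπ : ∀ x, 0 < π x)
    (ho : Function.Surjective o) : gibbs π o * gibbs π o = gibbs π o := by
  ext x y
  simp only [Matrix.mul_apply, gibbs, Matrix.of_apply]
  by_cases h : o x = o y
  · rw [if_pos h]
    have : ∀ z, (if o x = o z then π z / orbMass π o (o x) else 0) *
        (if o z = o y then π y / orbMass π o (o z) else 0)
        = if o z = o x then π z / orbMass π o (o x) * (π y / orbMass π o (o x)) else 0 := by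
      intro z
      by_cases hz : o x = o z
      · rw [if_pos hz, if_pos (hz ▸ h), if_pos hz.symm, ← hz]
      · rw [if_neg hz, zero_mul, if_neg (fun hh => hz hh.symm)]
    rw [Finset.sum_congr rfl fun z _ => this z, Finset.sum_ite, Finset.sum_const_zero,
      add_zero, ← Finset.sum_mul, ← Finset.sum_div]
    have hm := (orbMass_pos π o hπ ho (o x)).ne'
    rw [show (∑ z ∈ Finset.filter (fun z => o z = o x) Finset.univ, π z) = orbMass π o (o x)
      from rfl, div_self hm, one_mul]
  · rw [if_neg h]
    refine Finset.sum_eq_zero fun z _ => ?_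
    by_cases hz : o x = o z
    · rw [if_neg (fun hh : o z = o y => h (hz.trans hh)), mul_zero]
    · rw [if_neg hz, zero_mul]

lemma trace_gibbs_mul_le (π : X → ℝ) (o : X → Fin k) (hπ : ∀ x, 0 < π x)
    (ho : Function.Surjective o) {A : Matrix X X ℝ} (hA : IsStochastic A) :
    Matrix.trace (gibbs π o * A) ≤ (k : ℝ) := by
  rw [trace_mul_eq]
  rw [← Finset.sum_fiberwise Finset.univ o (fun x => ∑ z, gibbs π o x z * A z x)]
  have hbd : ∀ i : Fin k,
      ∑ x ∈ Finset.filter (fun x => o x = i) Finset.univ, ∑ z, gibbs π o x z * A z x ≤ 1 := by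
    intro i
    set S := Finset.filter (fun x => o x = i) Finset.univ with hS
    have key : ∀ x ∈ S, ∑ z, gibbs π o x z * A z x
        = ∑ z ∈ S, π z / orbMass π o i * A z x := by
      intro x hx
      have hox : o x = i := by simpa [hS] using hx
      rw [show (∑ z, gibbs π o x z * A z x)
          = ∑ z, (if o z = i then π z / orbMass π o i * A z x else 0) from
        Finset.sum_congr rfl fun z _ => by
          simp only [gibbs, Matrix.of_apply, hox]
          by_cases hz : o z = i
          · rw [if_pos hz.symm, if_pos hz]
          · rw [if_neg (fun hh => hz hh.symm), if_neg hz, zero_mul]]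
      rw [Finset.sum_ite, Finset.sum_const_zero, add_zero]
    rw [Finset.sum_congr rfl key, Finset.sum_comm]
    have : ∀ z ∈ S, ∑ x ∈ S, π z / orbMass π o i * A z x
        ≤ π z / orbMass π o i := by
      intro z hz
      rw [← Finset.mul_sum]
      have h1 : ∑ x ∈ S, A z x ≤ 1 := by
        rw [← hA.2 z]
        exact Finset.sum_le_sum_of_subset_of_nonneg (Finset.subset_univ S)
          (fun x _ _ => hA.1 z x)
      calc π z / orbMass π o i * ∑ x ∈ S, A z x
          ≤ π z / orbMass π o i * 1 := by
            exact mul_le_mul_of_nonneg_left h1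
              (div_nonneg (hπ z).le (orbMass_pos π o hπ ho i).le)
        _ = π z / orbMass π o i := mul_one _
    calc ∑ z ∈ S, ∑ x ∈ S, π z / orbMass π o i * A z x
        ≤ ∑ z ∈ S, π z / orbMass π o i := Finset.sum_le_sum this
      _ = orbMass π o i / orbMass π o i := by rw [← Finset.sum_div]; rfl
      _ = 1 := div_self (orbMass_pos π o hπ ho i).ne'
  calc ∑ i : Fin k, ∑ x ∈ Finset.filter (fun x => o x = i) Finset.univ,
        ∑ z, gibbs π o x z * A z x ≤ ∑ _i : Fin k, (1 : ℝ) := Finset.sum_le_sum fun i _ => hbd i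
    _ = (k : ℝ) := by simp

lemma frobSq_sub_pimat (π : X → ℝ) (hπ : ∀ x, 0 < π x) (hsum : ∑ x, π x = 1)
    {M : Matrix X X ℝ} (hM : ∀ x, ∑ y, M x y = 1) :
    frobSq π (M - Pimat π) = frobSq π M - 1 := by
  rw [frobSq_eq, frobSq_eq]
  have expand : ∀ x y, (π y * (M - Pimat π) y x / π x) * (M - Pimat π) y x
      = (π y * M y x / π x) * M y x - 2 * (π y * M y x) + π y * π x := by
    intro x y
    simp only [Matrix.sub_apply, Pimat, Matrix.of_apply]
    field_simp [(hπ x).ne']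
    ring
  calc ∑ x, ∑ y, (π y * (M - Pimat π) y x / π x) * (M - Pimat π) y x
      = ∑ x, ∑ y, ((π y * M y x / π x) * M y x - 2 * (π y * M y x) + π y * π x) := by
        exact Finset.sum_congr rfl fun x _ => Finset.sum_congr rfl fun y _ => expand x y
    _ = (∑ x, ∑ y, (π y * M y x / π x) * M y x) - 2 * (∑ x, ∑ y, π y * M y x)
        + ∑ x, ∑ y, π y * π x := by
        simp [Finset.sum_add_distrib, Finset.sum_sub_distrib, Finset.mul_sum]
    _ = (∑ x, ∑ y, (π y * M y x / π x) * M y x) - 1 := by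
        have h1 : ∑ x, ∑ y, π y * M y x = 1 := by
          rw [Finset.sum_comm]
          calc ∑ y, ∑ x, π y * M y x = ∑ y, π y * ∑ x, M y x := by simp [Finset.mul_sum]
            _ = 1 := by simp [hM, hsum]
        have h2 : ∑ x, ∑ y, π y * π x = 1 := by
          simp only [← Finset.sum_mul, hsum, one_mul]
        rw [h1, h2]; ring

lemma frobSq_lazy (π : X → ℝ) (hπ : ∀ x, 0 < π x) {Q : Matrix X X ℝ}
    (hQ0 : ∀ x y, 0 ≤ Q x y) (hlazy : ∀ x, 1 / 2 ≤ Q x x) :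
    (Fintype.card X : ℝ) / 4 ≤ frobSq π Q := by
  rw [frobSq_eq]
  have step1 : ∀ x : X, (1 : ℝ) / 4 ≤ ∑ y, (π y * Q y x / π x) * Q y x := by
    intro x
    have hx : (π x * Q x x / π x) * Q x x = Q x x * Q x x := by
      rw [mul_comm (π x) (Q x x), mul_div_assoc, div_self (hπ x).ne', mul_one]
    have hmem : (1 : ℝ)/4 ≤ (π x * Q x x / π x) * Q x x := by
      rw [hx]
      nlinarith [hlazy x]
    refine le_trans hmem ?_
    exact Finset.single_le_sum (f := fun y => (π y * Q y x / π x) * Q y x)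
      (fun y _ => mul_nonneg (div_nonneg (mul_nonneg (hπ y).le (hQ0 y x)) (hπ x).le) (hQ0 y x))
      (Finset.mem_univ x)
  calc (Fintype.card X : ℝ) / 4 = ∑ _x : X, (1 : ℝ) / 4 := by
        simp [Finset.sum_const, div_eq_mul_inv, mul_comm]
    _ ≤ ∑ x, ∑ y, (π y * Q y x / π x) * Q y x := Finset.sum_le_sum fun x _ => step1 x

end AuxLemmas

/-- ‖GP − Π‖²_{F,π} ≤ k − 1 and ‖GPG − Π‖²_{F,π} ≤ k − 1 for
π-reversible P, while ‖Q − Π‖²_{F,π} ≥ n/4 − 1 for π-stationary lazy Q. -/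
theorem stmt13 [Fintype X] [DecidableEq X] {k : ℕ} (π : X → ℝ) (o : X → Fin k)
    (hπ : ∀ x, 0 < π x) (hsum : ∑ x, π x = 1) (ho : Function.Surjective o)
    (P : Matrix X X ℝ) (hP : IsReversible π P)
    (Q : Matrix X X ℝ) (hQ : IsStationary π Q) (hlazy : ∀ x, 1 / 2 ≤ Q x x) :
    frobSq π (gibbs π o * P - Pimat π) ≤ (k : ℝ) - 1 ∧
    frobSq π (gibbs π o * P * gibbs π o - Pimat π) ≤ (k : ℝ) - 1 ∧
    (Fintype.card X : ℝ) / 4 - 1 ≤ frobSq π (Q - Pimat π) := by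
  have hPs := hP.1
  set G := gibbs π o with hG
  have hGs : IsStochastic G := gibbs_stochastic π o hπ ho
  have hGG : G * G = G := gibbs_idem π o hπ ho
  have hGadj : piAdj π G = G := piAdj_gibbs π o hπ
  have hPadj : piAdj π P = P := piAdj_rev π hπ hP
  have hQs := hQ.1
  -- part 1
  have hGP : IsStochastic (G * P) := hGs.mul hPs
  have t1 : frobSq π (G * P) = Matrix.trace (G * (P * P)) := by
    rw [frobSq, piAdj_mul π hπ, hPadj, hGadj]
    have e1 : P * G * (G * P) = P * G * P := by
      calc P * G * (G * P) = P * (G * G) * P := by simp only [mul_assoc]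
        _ = P * G * P := by rw [hGG]
    rw [e1, Matrix.trace_mul_comm, ← mul_assoc, Matrix.trace_mul_comm]
  have part1 : frobSq π (G * P - Pimat π) ≤ (k : ℝ) - 1 := by
    rw [frobSq_sub_pimat π hπ hsum hGP.2, t1]
    have := trace_gibbs_mul_le π o hπ ho (hPs.mul hPs)
    linarith
  -- part 2
  have hGPG : IsStochastic (G * P * G) := hGP.mul hGs
  have t2 : frobSq π (G * P * G) = Matrix.trace (G * (P * (G * P))) := by
    rw [frobSq, piAdj_mul π hπ, piAdj_mul π hπ, hPadj, hGadj]
    have e2 : G * (P * G) * (G * P * G) = G * (P * (G * P)) * G := by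
      simp only [← mul_assoc]
      rw [show G * P * G * G = G * P * G from by rw [mul_assoc (G * P) G G, hGG]]
    rw [e2, Matrix.trace_mul_comm, ← mul_assoc, hGG]
  have part2 : frobSq π (G * P * G - Pimat π) ≤ (k : ℝ) - 1 := by
    rw [frobSq_sub_pimat π hπ hsum hGPG.2, t2]
    have := trace_gibbs_mul_le π o hπ ho (hPs.mul (hGs.mul hPs))
    linarith
  -- part 3
  have part3 : (Fintype.card X : ℝ) / 4 - 1 ≤ frobSq π (Q - Pimat π) := by
    rw [frobSq_sub_pimat π hπ hsum hQs.2]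
    have := frobSq_lazy π hπ hQs.1 hlazy
    linarith
  exact ⟨part1, part2, part3⟩

end
end GpgStmt
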